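/- arXiv:2407.15418 — 2 statements merged into one kernel-verified Lean document; each statement's English description precedes it below -/
import Mathlib

section
/- Let n ≥ 1 and κ ≥ 1 be integers, let b_0, b_1, …, b_κ ∈ ℂ^n be vectors, let g_0, g_1, …, g_κ be real numbers with |g_t| ≤ 1 for every t, and let ε ∈ {+1, −1}. Then the n × n complex matrix M := κ · Σ_{j=0}^κ b_j b_j^H + ε · Σ_{0 ≤ j, s ≤ κ, j ≠ s} ( ∏_{t ∉ {j, s}} g_t ) · b_j b_s^H is Hermitian positive semidefinite; equivalently, for every v ∈ ℂ^n one has κ · Σ_{j=0}^κ |⟨b_j, v⟩|² + ε · Σ_{j ≠ s} ( ∏_{t ∉ {j, s}} g_t ) · ⟨b_j, v⟩ · conj(⟨b_s, v⟩) ≥ 0. -/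
open Finset
open scoped ComplexOrder ComplexConjugate

noncomputable section

/-- Pointwise inequality: for `|e| ≤ 1`,
`0 ≤ |z|² + |w|² + e (z w̄ + w z̄)`. -/
lemma hessian_pointwise_nonneg (e : ℝ) (he : |e| ≤ 1) (z w : ℂ) :
    0 ≤ z * conj z + w * conj w + (e : ℂ) * (z * conj w + w * conj z) := by
  have h0 : w * conj z = conj (z * conj w) := by
    rw [map_mul, Complex.conj_conj]; ring
  have h1 : z * conj w + w * conj z = ((2 * (z * conj w).re : ℝ) : ℂ) := by
    rw [h0, Complex.add_conj]
  rw [Complex.mul_conj, Complex.mul_conj, h1]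
  have h2 : (Complex.normSq z : ℂ) + (Complex.normSq w : ℂ) +
      (e : ℂ) * ((2 * (z * conj w).re : ℝ) : ℂ) =
      ((Complex.normSq z + Complex.normSq w + e * (2 * (z * conj w).re) : ℝ) : ℂ) := by
    push_cast; ring
  rw [h2, Complex.zero_le_real]
  have habs : |(z * conj w).re| ≤ ‖z‖ * ‖w‖ := by
    calc |(z * conj w).re| ≤ ‖z * conj w‖ := Complex.abs_re_le_norm _
      _ = ‖z‖ * ‖w‖ := by rw [norm_mul, Complex.norm_conj]
  have hz : Complex.normSq z = ‖z‖ ^ 2 := (Complex.sq_norm z).symm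
  have hw : Complex.normSq w = ‖w‖ ^ 2 := (Complex.sq_norm w).symm
  obtain ⟨he1, he2⟩ := abs_le.mp he
  obtain ⟨hr1, hr2⟩ := abs_le.mp habs
  nlinarith [sq_nonneg (‖z‖ - ‖w‖),
    mul_nonneg (by linarith : (0:ℝ) ≤ 1 + e)
      (by linarith : (0:ℝ) ≤ ‖z‖ * ‖w‖ + (z * conj w).re),
    mul_nonneg (by linarith : (0:ℝ) ≤ 1 - e)
      (by linarith : (0:ℝ) ≤ ‖z‖ * ‖w‖ - (z * conj w).re)]

/-- Swapping a double sum over `j` and `s ∈ univ.erase j`. -/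
lemma hessian_erase_sum_swap {N : ℕ} (f : Fin N → Fin N → ℂ) :
    ∑ j, ∑ s ∈ univ.erase j, f j s = ∑ s, ∑ j ∈ univ.erase s, f j s :=
  Finset.sum_comm' (by intro x y; simp [Finset.mem_erase, and_comm, eq_comm, ne_comm])

/-- The scalar form of the positivity estimate. -/
lemma hessian_key_scalar (κ : ℕ) (g : Fin (κ + 1) → ℝ) (hg : ∀ t, |g t| ≤ 1)
    (ε : ℂ) (hε : ε = 1 ∨ ε = -1) (c : Fin (κ + 1) → ℂ) :
    0 ≤ (κ : ℂ) * ∑ j, c j * conj (c j) +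
      ε * ∑ j, ∑ s ∈ univ.erase j,
        (∏ t ∈ (univ.erase j).erase s, ((g t : ℝ) : ℂ)) * (c j * conj (c s)) := by
  set p : Fin (κ + 1) → Fin (κ + 1) → ℝ := fun j s => ∏ t ∈ (univ.erase j).erase s, g t with hp
  have hpabs : ∀ j s, |p j s| ≤ 1 := by
    intro j s
    rw [hp]
    simp only
    rw [Finset.abs_prod]
    exact Finset.prod_le_one (fun t _ => abs_nonneg _) (fun t _ => hg t)
  have hpsymm : ∀ j s, p j s = p s j := by
    intro j s; simp only [hp, Finset.erase_right_comm]
  have hpcast : ∀ j s : Fin (κ + 1),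
      (∏ t ∈ (univ.erase j).erase s, ((g t : ℝ) : ℂ)) = ((p j s : ℝ) : ℂ) := by
    intro j s; rw [hp]; push_cast; rfl
  simp only [hpcast]
  set F : Fin (κ + 1) → Fin (κ + 1) → ℂ := fun j s =>
    c j * conj (c j) + c s * conj (c s) +
      ε * (((p j s : ℝ) : ℂ) * (c j * conj (c s) + c s * conj (c j))) with hF
  have hFnonneg : ∀ j s, 0 ≤ F j s := by
    intro j s
    rcases hε with rfl | rfl
    · have := hessian_pointwise_nonneg (p j s) (hpabs j s) (c j) (c s)
      simpa [hF] using this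
    · have h' : |(-(p j s) : ℝ)| ≤ 1 := by rw [abs_neg]; exact hpabs j s
      have := hessian_pointwise_nonneg (-(p j s)) h' (c j) (c s)
      rw [hF]
      simp only
      convert this using 1
      push_cast; ring
  have hswap : ∀ f : Fin (κ + 1) → Fin (κ + 1) → ℂ,
      ∑ j, ∑ s ∈ univ.erase j, f j s = ∑ s, ∑ j ∈ univ.erase s, f j s :=
    fun f => hessian_erase_sum_swap f
  have hcard : ∀ j : Fin (κ + 1), (univ.erase j).card = κ := by
    intro j
    rw [Finset.card_erase_of_mem (mem_univ j), Finset.card_univ, Fintype.card_fin]; omega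
  have hsum : 0 ≤ ∑ j, ∑ s ∈ univ.erase j, F j s :=
    Finset.sum_nonneg fun j _ => Finset.sum_nonneg fun s _ => hFnonneg j s
  have heq : ∑ j, ∑ s ∈ univ.erase j, F j s =
      2 * ((κ : ℂ) * ∑ j, c j * conj (c j) +
        ε * ∑ j, ∑ s ∈ univ.erase j, ((p j s : ℝ) : ℂ) * (c j * conj (c s))) := by
    have e1 : ∑ j, ∑ s ∈ univ.erase j, (c j * conj (c j)) = (κ : ℂ) * ∑ j, c j * conj (c j) := by
      rw [Finset.mul_sum]
      refine Finset.sum_congr rfl fun j _ => ?_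
      rw [Finset.sum_const, hcard j, nsmul_eq_mul]
    have e2 : ∑ j, ∑ s ∈ univ.erase j, (c s * conj (c s)) = (κ : ℂ) * ∑ j, c j * conj (c j) := by
      rw [hswap (fun j s => c s * conj (c s))]
      exact e1
    have e3 : ∑ j, ∑ s ∈ univ.erase j, (((p j s : ℝ) : ℂ) * (c s * conj (c j)))
        = ∑ j, ∑ s ∈ univ.erase j, (((p j s : ℝ) : ℂ) * (c j * conj (c s))) := by
      rw [hswap (fun j s => ((p j s : ℝ) : ℂ) * (c s * conj (c j)))]
      refine Finset.sum_congr rfl fun s _ => Finset.sum_congr rfl fun j _ => ?_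
      rw [hpsymm s j]
    calc ∑ j, ∑ s ∈ univ.erase j, F j s
        = ∑ j, ((∑ s ∈ univ.erase j, (c j * conj (c j)))
            + (∑ s ∈ univ.erase j, (c s * conj (c s)))
            + (ε * (∑ s ∈ univ.erase j, (((p j s : ℝ) : ℂ) * (c j * conj (c s))))
              + ε * (∑ s ∈ univ.erase j, (((p j s : ℝ) : ℂ) * (c s * conj (c j)))))) := by
          refine Finset.sum_congr rfl fun j _ => ?_
          rw [Finset.mul_sum, Finset.mul_sum, ← Finset.sum_add_distrib, ← Finset.sum_add_distrib,
            ← Finset.sum_add_distrib]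
          refine Finset.sum_congr rfl fun s _ => ?_
          rw [hF]; ring
      _ = (∑ j, ∑ s ∈ univ.erase j, (c j * conj (c j)))
          + (∑ j, ∑ s ∈ univ.erase j, (c s * conj (c s)))
          + (ε * ∑ j, ∑ s ∈ univ.erase j, (((p j s : ℝ) : ℂ) * (c j * conj (c s)))
            + ε * ∑ j, ∑ s ∈ univ.erase j, (((p j s : ℝ) : ℂ) * (c s * conj (c j)))) := by
          rw [Finset.sum_add_distrib, Finset.sum_add_distrib, Finset.sum_add_distrib,
            ← Finset.mul_sum, ← Finset.mul_sum]
      _ = 2 * ((κ : ℂ) * ∑ j, c j * conj (c j) +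
            ε * ∑ j, ∑ s ∈ univ.erase j, ((p j s : ℝ) : ℂ) * (c j * conj (c s))) := by
          rw [e1, e2, e3]; ring
  rw [heq] at hsum
  have h2 : (0 : ℂ) ≤ 2⁻¹ := by
    rw [show ((2 : ℂ))⁻¹ = ((2⁻¹ : ℝ) : ℂ) by push_cast; ring, Complex.zero_le_real]
    norm_num
  have key := mul_nonneg h2 hsum
  have hx : (κ : ℂ) * ∑ j, c j * conj (c j) +
      ε * ∑ j, ∑ s ∈ univ.erase j, ((p j s : ℝ) : ℂ) * (c j * conj (c s)) =
      2⁻¹ * (2 * ((κ : ℂ) * ∑ j, c j * conj (c j) +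
        ε * ∑ j, ∑ s ∈ univ.erase j, ((p j s : ℝ) : ℂ) * (c j * conj (c s)))) := by
    ring
  rw [hx]
  exact key

/-- Expansion of the quadratic form of the matrix `M`. -/
lemma hessian_quad_form_eq (n N : ℕ) (K ε : ℂ) (b : Fin N → Fin n → ℂ)
    (g : Fin N → ℝ) (x : Fin n → ℂ) :
    dotProduct (star x) ((Matrix.of fun a a' : Fin n =>
        K * ∑ j, b j a * conj (b j a') +
          ε * ∑ j, ∑ s ∈ univ.erase j,
            (∏ t ∈ (univ.erase j).erase s, ((g t : ℝ) : ℂ)) *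
              (b j a * conj (b s a'))).mulVec x) =
    K * ∑ j, (conj (∑ a, conj (b j a) * x a)) * (∑ a, conj (b j a) * x a) +
      ε * ∑ j, ∑ s ∈ univ.erase j,
        (∏ t ∈ (univ.erase j).erase s, ((g t : ℝ) : ℂ)) *
          ((conj (∑ a, conj (b j a) * x a)) * (∑ a, conj (b s a) * x a)) := by
  simp only [dotProduct, Matrix.mulVec, Matrix.of_apply, Pi.star_apply, Complex.star_def,
    dotProduct]
  simp only [map_sum, _root_.map_mul, Complex.conj_conj, Finset.sum_mul_sum]
  simp only [add_mul, mul_add, Finset.sum_mul, Finset.mul_sum, Finset.sum_add_distrib]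
  congr 1
  · -- first part : LHS (a, a', j), RHS (j, a, a')
    conv_rhs => rw [Finset.sum_comm]
    conv_rhs => enter [2, a]; rw [Finset.sum_comm]
    exact Finset.sum_congr rfl fun a _ => Finset.sum_congr rfl fun a' _ =>
      Finset.sum_congr rfl fun j _ => by ring
  · -- second part : LHS (a, a', j, s), RHS (j, s, a, a')
    conv_rhs => enter [2, j]; rw [Finset.sum_comm]
    conv_rhs => rw [Finset.sum_comm]
    conv_rhs => enter [2, a, 2, j]; rw [Finset.sum_comm]
    conv_rhs => enter [2, a]; rw [Finset.sum_comm]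
    exact Finset.sum_congr rfl fun a _ => Finset.sum_congr rfl fun a' _ =>
      Finset.sum_congr rfl fun j _ => Finset.sum_congr rfl fun s _ => by ring

/-- Lemma: the Hermitian matrix
`M = κ Σ_j b_j b_j^H + ε Σ_{j ≠ s} (∏_{t ∉ {j,s}} g_t) b_j b_s^H`
is positive semidefinite whenever `|g_t| ≤ 1` for all `t` and `ε = ±1`; equivalently, for
every vector `v`,
`κ Σ_j |⟨b_j, v⟩|² + ε Σ_{j ≠ s} (∏_{t ∉ {j,s}} g_t) ⟨b_j, v⟩ conj(⟨b_s, v⟩) ≥ 0`. -/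
theorem hessian_matrix_posSemidef
    (n κ : ℕ) (hn : 1 ≤ n) (hκ : 1 ≤ κ)
    (b : Fin (κ + 1) → Fin n → ℂ)
    (g : Fin (κ + 1) → ℝ) (hg : ∀ t, |g t| ≤ 1)
    (ε : ℂ) (hε : ε = 1 ∨ ε = -1) :
    -- the matrix `M`
    (Matrix.of fun a a' : Fin n =>
        (κ : ℂ) * ∑ j, b j a * conj (b j a') +
          ε * ∑ j, ∑ s ∈ univ.erase j,
            (∏ t ∈ (univ.erase j).erase s, ((g t : ℝ) : ℂ)) *
              (b j a * conj (b s a'))).PosSemidef ∧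
    -- equivalently, the associated Hermitian form is nonnegative
    ∀ v : Fin n → ℂ,
      0 ≤ (κ : ℂ) * ∑ j, (∑ a, conj (b j a) * v a) * conj (∑ a, conj (b j a) * v a) +
          ε * ∑ j, ∑ s ∈ univ.erase j,
            (∏ t ∈ (univ.erase j).erase s, ((g t : ℝ) : ℂ)) *
              ((∑ a, conj (b j a) * v a) * conj (∑ a, conj (b s a) * v a)) := by
  constructor
  · rw [Matrix.posSemidef_iff_dotProduct_mulVec]
    constructor
    · -- Hermitian
      have hεconj : conj ε = ε := by rcases hε with rfl | rfl <;> simp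
      apply Matrix.ext
      intro a a'
      simp only [Matrix.conjTranspose_apply, Matrix.of_apply, Complex.star_def, map_sum,
        _root_.map_mul, map_add, Complex.conj_conj, map_natCast, hεconj, map_prod,
        Complex.conj_ofReal]
      congr 1
      · congr 1
        exact Finset.sum_congr rfl fun j _ => by ring
      · congr 1
        rw [hessian_erase_sum_swap]
        refine Finset.sum_congr rfl fun j _ => Finset.sum_congr rfl fun s _ => ?_
        rw [Finset.erase_right_comm]
        ring
    · -- quadratic form nonneg
      intro x
      rw [hessian_quad_form_eq]
      have := hessian_key_scalar κ g hg ε hε (fun j => conj (∑ a, conj (b j a) * x a))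
      simpa only [Complex.conj_conj] using this
  · intro v
    exact hessian_key_scalar κ g hg ε hε (fun j => ∑ a, conj (b j a) * v a)

end
end

section
/- Let n ≥ 1 and κ ≥ 1 be integers, U ⊆ ℂ^n an open set, and G_0, G_1, …, G_κ : U → ℝ functions of class C² such that |G_j(x)| ≤ 1 for all x ∈ U and all j, and such that each G_j is Levi-positive on U, i.e. D²G_j(x)(v, v) + D²G_j(x)(iv, iv) ≥ 0 for every x ∈ U and v ∈ ℂ^n. For ε ∈ {+1, −1}, define Φ^ε := Σ_{j=0}^κ ( (κ+1) G_j + (κ/2) G_j² ) + ε ∏_{j=0}^κ G_j. Then for every x ∈ U and v ∈ ℂ^n, D²Φ^ε(x)(v, v) + D²Φ^ε(x)(iv, iv) ≥ Σ_{j=0}^κ ( κ + 1 + κ G_j(x) + ε ∏_{s ≠ j} G_s(x) ) · ( D²G_j(x)(v, v) + D²G_j(x)(iv, iv) ) ≥ 0. In particular, Φ^+ and Φ^− are Levi-positive (hence plurisubharmonic) on U. -/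
open Finset

noncomputable section

/-- The second (real) Fréchet derivative of `u : ℂⁿ → ℝ` at `x`, evaluated at `(v, w)`. -/
def D2 {n : ℕ} (u : (Fin n → ℂ) → ℝ) (x v w : Fin n → ℂ) : ℝ :=
  fderiv ℝ (fderiv ℝ u) x v w

/-- The Levi-type quantity `D²u(x)(v,v) + D²u(x)(iv,iv)`; a `C²` function is p.s.h. on an open
set iff this is nonnegative there for all `v`. -/
def Levi {n : ℕ} (u : (Fin n → ℂ) → ℝ) (x v : Fin n → ℂ) : ℝ :=
  D2 u x v v + D2 u x (Complex.I • v) (Complex.I • v)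

section helpers
variable {n : ℕ} {U : Set (Fin n → ℂ)} {x : Fin n → ℂ}

lemma diffAt {f : (Fin n → ℂ) → ℝ} (hU : IsOpen U) (hf : ContDiffOn ℝ 2 f U)
    {y : Fin n → ℂ} (hy : y ∈ U) : DifferentiableAt ℝ f y :=
  (hf.contDiffAt (hU.mem_nhds hy)).differentiableAt two_ne_zero

lemma diffFderivAt {f : (Fin n → ℂ) → ℝ} (hU : IsOpen U) (hf : ContDiffOn ℝ 2 f U)
    (hx : x ∈ U) : DifferentiableAt ℝ (fderiv ℝ f) x :=
  ((hf.contDiffAt (hU.mem_nhds hx)).fderiv_right (m := 1) (by norm_num)).differentiableAt one_ne_zero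

lemma d2_sum (hU : IsOpen U) (hx : x ∈ U) {ι : Type} (u : Finset ι)
    {f : ι → (Fin n → ℂ) → ℝ} (hf : ∀ i, ContDiffOn ℝ 2 (f i) U) (v w : Fin n → ℂ) :
    D2 (fun y => ∑ i ∈ u, f i y) x v w = ∑ i ∈ u, D2 (f i) x v w := by
  have hev : fderiv ℝ (fun y => ∑ i ∈ u, f i y) =ᶠ[nhds x]
      fun y => ∑ i ∈ u, fderiv ℝ (f i) y := by
    filter_upwards [hU.mem_nhds hx] with y hy
    exact fderiv_fun_sum (fun i _ => diffAt hU (hf i) hy)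
  unfold D2
  rw [hev.fderiv_eq, fderiv_fun_sum (fun i _ => diffFderivAt hU (hf i) hx)]
  simp

lemma d2_mul (hU : IsOpen U) (hx : x ∈ U) {f g : (Fin n → ℂ) → ℝ}
    (hf : ContDiffOn ℝ 2 f U) (hg : ContDiffOn ℝ 2 g U) (v w : Fin n → ℂ) :
    D2 (fun y => f y * g y) x v w = f x * D2 g x v w + g x * D2 f x v w
      + fderiv ℝ f x v * fderiv ℝ g x w + fderiv ℝ f x w * fderiv ℝ g x v := by
  have hev : fderiv ℝ (fun y => f y * g y) =ᶠ[nhds x]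
      fun y => f y • fderiv ℝ g y + g y • fderiv ℝ f y := by
    filter_upwards [hU.mem_nhds hx] with y hy
    exact fderiv_mul (diffAt hU hf hy) (diffAt hU hg hy)
  unfold D2
  rw [hev.fderiv_eq, fderiv_fun_add
      ((diffAt hU hf hx).fun_smul (diffFderivAt hU hg hx))
      ((diffAt hU hg hx).fun_smul (diffFderivAt hU hf hx)),
    fderiv_fun_smul (diffAt hU hf hx) (diffFderivAt hU hg hx),
    fderiv_fun_smul (diffAt hU hg hx) (diffFderivAt hU hf hx)]
  simp [ContinuousLinearMap.smulRight_apply]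
  ring

lemma d2_prod (hU : IsOpen U) (hx : x ∈ U) {ι : Type} [DecidableEq ι] (u : Finset ι)
    {f : ι → (Fin n → ℂ) → ℝ} (hf : ∀ i, ContDiffOn ℝ 2 (f i) U) (v w : Fin n → ℂ) :
    D2 (fun y => ∏ i ∈ u, f i y) x v w =
      ∑ i ∈ u, ((∏ j ∈ u.erase i, f j x) * D2 (f i) x v w
        + ∑ k ∈ u.erase i, (∏ j ∈ (u.erase i).erase k, f j x)
            * fderiv ℝ (f k) x v * fderiv ℝ (f i) x w) := by
  have hev : fderiv ℝ (fun y => ∏ i ∈ u, f i y) =ᶠ[nhds x]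
      fun y => ∑ i ∈ u, (∏ j ∈ u.erase i, f j y) • fderiv ℝ (f i) y := by
    filter_upwards [hU.mem_nhds hx] with y hy
    exact fderiv_finset_prod (fun i _ => diffAt hU (hf i) hy)
  unfold D2
  have hpd : ∀ i : ι, DifferentiableAt ℝ (fun y => ∏ j ∈ u.erase i, f j y) x := fun i =>
    (HasFDerivAt.finset_prod (fun j _ => (diffAt hU (hf j) hx).hasFDerivAt)).differentiableAt
  have hsum := fderiv_fun_sum (𝕜 := ℝ) (x := x) (u := u)
    (A := fun i y => (∏ j ∈ u.erase i, f j y) • fderiv ℝ (f i) y)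
    (fun i _ => by
      exact DifferentiableAt.smul (𝕜' := ℝ) (c := fun y => ∏ j ∈ u.erase i, f j y)
        (f := fderiv ℝ (f i)) (hpd i)
        (diffFderivAt hU (hf i) hx))
  beta_reduce at hsum
  rw [hev.fderiv_eq, hsum]
  rw [ContinuousLinearMap.sum_apply, ContinuousLinearMap.sum_apply]
  refine Finset.sum_congr rfl fun i hi => ?_
  have hsmul := fderiv_fun_smul (𝕜' := ℝ) (c := fun y => ∏ j ∈ u.erase i, f j y)
    (f := fderiv ℝ (f i)) (x := x) (hpd i)
    (diffFderivAt hU (hf i) hx)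
  have hprod := fderiv_finset_prod (𝕜 := ℝ) (u := u.erase i) (g := f) (x := x)
    (fun j _ => diffAt hU (hf j) hx)
  rw [hsmul, hprod]
  simp [ContinuousLinearMap.smulRight_apply, Finset.sum_mul]
lemma d2_add (hU : IsOpen U) (hx : x ∈ U) {f g : (Fin n → ℂ) → ℝ}
    (hf : ContDiffOn ℝ 2 f U) (hg : ContDiffOn ℝ 2 g U) (v w : Fin n → ℂ) :
    D2 (fun y => f y + g y) x v w = D2 f x v w + D2 g x v w := by
  have hev : fderiv ℝ (fun y => f y + g y) =ᶠ[nhds x]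
      fun y => fderiv ℝ f y + fderiv ℝ g y := by
    filter_upwards [hU.mem_nhds hx] with y hy
    exact fderiv_add (diffAt hU hf hy) (diffAt hU hg hy)
  unfold D2
  rw [hev.fderiv_eq, fderiv_fun_add (diffFderivAt hU hf hx) (diffFderivAt hU hg hx)]
  simp

lemma d2_const_mul (hU : IsOpen U) (hx : x ∈ U) {f : (Fin n → ℂ) → ℝ} (c : ℝ)
    (hf : ContDiffOn ℝ 2 f U) (v w : Fin n → ℂ) :
    D2 (fun y => c * f y) x v w = c * D2 f x v w := by
  have hev : fderiv ℝ (fun y => c * f y) =ᶠ[nhds x]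
      fun y => c • fderiv ℝ f y := by
    filter_upwards [hU.mem_nhds hx] with y hy
    exact fderiv_const_mul (diffAt hU hf hy) c
  unfold D2
  rw [hev.fderiv_eq, fderiv_fun_const_smul (diffFderivAt hU hf hx)]
  simp

end helpers

lemma contDiffOn_finset_prod {n : ℕ} {U : Set (Fin n → ℂ)} {ι : Type}
    {f : ι → (Fin n → ℂ) → ℝ} (hf : ∀ i, ContDiffOn ℝ 2 (f i) U) (t : Finset ι) :
    ContDiffOn ℝ 2 (fun y => ∏ i ∈ t, f i y) U := by
  classical
  induction t using Finset.induction_on with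
  | empty => simp only [Finset.prod_empty]; exact contDiffOn_const
  | @insert a s ha ih =>
    simp only [Finset.prod_insert ha]
    exact (hf a).mul ih

/-- Lemma: positivity of the complex Hessian of the auxiliary functions
`Φ^± = Σ_j ((κ+1) G_j + (κ/2) G_j²) ± Π_j G_j`. If each `G_j` is `C²`, bounded by `1`, and
Levi-positive on the open set `U`, then for all `x ∈ U` and `v ∈ ℂⁿ`,
`Levi Φ^± x v ≥ Σ_j (κ + 1 + κ G_j(x) ± Π_{s ≠ j} G_s(x)) Levi G_j x v ≥ 0`;
in particular `Φ^±` is Levi-positive (hence p.s.h.) on `U`. -/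
theorem phi_levi_positive
    (n κ : ℕ) (hn : 1 ≤ n) (hκ : 1 ≤ κ)
    (U : Set (Fin n → ℂ)) (hU : IsOpen U)
    (G : Fin (κ + 1) → (Fin n → ℂ) → ℝ)
    (hGsmooth : ∀ j, ContDiffOn ℝ 2 (G j) U)
    (hGbound : ∀ j, ∀ x ∈ U, |G j x| ≤ 1)
    (hGlevi : ∀ j, ∀ x ∈ U, ∀ v : Fin n → ℂ, 0 ≤ Levi (G j) x v)
    (ε : ℝ) (hε : ε = 1 ∨ ε = -1) :
    ∀ x ∈ U, ∀ v : Fin n → ℂ,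
      (∑ j, ((κ : ℝ) + 1 + κ * G j x + ε * ∏ s ∈ univ.erase j, G s x) * Levi (G j) x v) ≤
        Levi (fun y => (∑ j, (((κ : ℝ) + 1) * G j y + (κ : ℝ) / 2 * (G j y) ^ 2)) +
          ε * ∏ j, G j y) x v ∧
      0 ≤ ∑ j, ((κ : ℝ) + 1 + κ * G j x + ε * ∏ s ∈ univ.erase j, G s x) * Levi (G j) x v ∧
      0 ≤ Levi (fun y => (∑ j, (((κ : ℝ) + 1) * G j y + (κ : ℝ) / 2 * (G j y) ^ 2)) +
          ε * ∏ j, G j y) x v := by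
  intro x hx v
  -- smoothness facts
  have hG2 : ∀ j, ContDiffOn ℝ 2 (fun y => ((κ:ℝ)+1) * G j y + (κ:ℝ)/2 * G j y ^ 2) U :=
    fun j => (contDiffOn_const.mul (hGsmooth j)).add
      (contDiffOn_const.mul ((hGsmooth j).pow 2))
  have hA : ContDiffOn ℝ 2 (fun y => ∑ j, (((κ:ℝ)+1) * G j y + (κ:ℝ)/2 * G j y ^ 2)) U :=
    ContDiffOn.sum fun j _ => hG2 j
  have hB : ContDiffOn ℝ 2 (fun y => ε * ∏ j, G j y) U :=
    contDiffOn_const.mul (contDiffOn_finset_prod hGsmooth univ)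
  -- second derivative of each summand
  have hterm : ∀ (j : Fin (κ+1)) (p q : Fin n → ℂ),
      D2 (fun y => ((κ:ℝ)+1) * G j y + (κ:ℝ)/2 * G j y ^ 2) x p q =
        ((κ:ℝ)+1) * D2 (G j) x p q + (κ:ℝ)/2 * (G j x * D2 (G j) x p q + G j x * D2 (G j) x p q
          + fderiv ℝ (G j) x p * fderiv ℝ (G j) x q + fderiv ℝ (G j) x q * fderiv ℝ (G j) x p) := by
    intro j p q
    have hsqfun : (fun y => G j y ^ 2) = fun y => G j y * G j y := by
      funext y; ring
    rw [d2_add hU hx (contDiffOn_const.mul (hGsmooth j))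
        (contDiffOn_const.mul ((hGsmooth j).pow 2)) p q,
      d2_const_mul hU hx _ (hGsmooth j) p q]
    have h2 : D2 (fun y => (κ:ℝ)/2 * G j y ^ 2) x p q = (κ:ℝ)/2 * D2 (fun y => G j y ^ 2) x p q :=
      d2_const_mul hU hx _ ((hGsmooth j).pow 2) p q
    rw [h2, hsqfun, d2_mul hU hx (hGsmooth j) (hGsmooth j) p q]
  -- full second derivative
  have hD2 : ∀ p q : Fin n → ℂ,
      D2 (fun y => (∑ j, (((κ : ℝ) + 1) * G j y + (κ : ℝ) / 2 * (G j y) ^ 2)) +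
          ε * ∏ j, G j y) x p q =
        (∑ j, (((κ:ℝ)+1) * D2 (G j) x p q + (κ:ℝ)/2 * (G j x * D2 (G j) x p q
            + G j x * D2 (G j) x p q
            + fderiv ℝ (G j) x p * fderiv ℝ (G j) x q
            + fderiv ℝ (G j) x q * fderiv ℝ (G j) x p)))
          + ε * ∑ j, ((∏ s ∈ univ.erase j, G s x) * D2 (G j) x p q
            + ∑ k ∈ univ.erase j, (∏ s ∈ (univ.erase j).erase k, G s x)
                * fderiv ℝ (G k) x p * fderiv ℝ (G j) x q) := by
    intro p q
    rw [d2_add hU hx hA hB p q]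
    have hs := d2_sum hU hx (f := fun j y => ((κ:ℝ)+1) * G j y + (κ:ℝ)/2 * G j y ^ 2)
      univ hG2 p q
    beta_reduce at hs
    rw [hs, d2_const_mul hU hx ε (contDiffOn_finset_prod hGsmooth univ) p q,
      d2_prod hU hx univ hGsmooth p q]
    congr 1
    exact Finset.sum_congr rfl fun j _ => hterm j p q

  -- Levi formula
  have hsplit : ∀ j : Fin (κ+1),
      ∑ k ∈ univ.erase j, (∏ s ∈ (univ.erase j).erase k, G s x)
        * (fderiv ℝ (G k) x v * fderiv ℝ (G j) x v
           + fderiv ℝ (G k) x (Complex.I • v) * fderiv ℝ (G j) x (Complex.I • v))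
      = (∑ k ∈ univ.erase j, (∏ s ∈ (univ.erase j).erase k, G s x)
            * fderiv ℝ (G k) x v * fderiv ℝ (G j) x v)
        + ∑ k ∈ univ.erase j, (∏ s ∈ (univ.erase j).erase k, G s x)
            * fderiv ℝ (G k) x (Complex.I • v) * fderiv ℝ (G j) x (Complex.I • v) := by
    intro j; rw [← Finset.sum_add_distrib]; exact Finset.sum_congr rfl fun k _ => by ring
  have main : Levi (fun y => (∑ j, (((κ : ℝ) + 1) * G j y + (κ : ℝ) / 2 * (G j y) ^ 2)) +
        ε * ∏ j, G j y) x v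
      = ∑ j, (((κ:ℝ)+1+κ*G j x + ε * ∏ s ∈ univ.erase j, G s x) * Levi (G j) x v
        + (κ:ℝ) * ((fderiv ℝ (G j) x v)^2 + (fderiv ℝ (G j) x (Complex.I • v))^2)
        + ε * ∑ k ∈ univ.erase j, (∏ s ∈ (univ.erase j).erase k, G s x)
            * (fderiv ℝ (G k) x v * fderiv ℝ (G j) x v
               + fderiv ℝ (G k) x (Complex.I • v) * fderiv ℝ (G j) x (Complex.I • v))) := by
    simp only [Levi]
    rw [hD2 v v, hD2 (Complex.I • v) (Complex.I • v)]
    simp only [hsplit]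
    rw [Finset.mul_sum, Finset.mul_sum, ← Finset.sum_add_distrib, ← Finset.sum_add_distrib,
      ← Finset.sum_add_distrib]
    exact Finset.sum_congr rfl fun j _ => by ring
  -- bounds
  have habsε : |ε| = 1 := by rcases hε with h | h <;> simp [h]
  have hone : ∀ j k : Fin (κ+1),
      |(∏ s ∈ (univ.erase j).erase k, G s x)
        * (fderiv ℝ (G k) x v * fderiv ℝ (G j) x v
           + fderiv ℝ (G k) x (Complex.I • v) * fderiv ℝ (G j) x (Complex.I • v))|
      ≤ ((fderiv ℝ (G j) x v)^2 + (fderiv ℝ (G j) x (Complex.I • v))^2)/2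
        + ((fderiv ℝ (G k) x v)^2 + (fderiv ℝ (G k) x (Complex.I • v))^2)/2 := by
    intro j k
    have hQ : |∏ s ∈ (univ.erase j).erase k, G s x| ≤ 1 := by
      rw [Finset.abs_prod]
      exact Finset.prod_le_one (fun s _ => abs_nonneg _) (fun s _ => hGbound s x hx)
    have he : |fderiv ℝ (G k) x v * fderiv ℝ (G j) x v
        + fderiv ℝ (G k) x (Complex.I • v) * fderiv ℝ (G j) x (Complex.I • v)|
        ≤ ((fderiv ℝ (G j) x v)^2 + (fderiv ℝ (G j) x (Complex.I • v))^2)/2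
          + ((fderiv ℝ (G k) x v)^2 + (fderiv ℝ (G k) x (Complex.I • v))^2)/2 := by
      rw [abs_le]
      constructor <;>
        nlinarith [sq_nonneg (fderiv ℝ (G k) x v + fderiv ℝ (G j) x v),
          sq_nonneg (fderiv ℝ (G k) x v - fderiv ℝ (G j) x v),
          sq_nonneg (fderiv ℝ (G k) x (Complex.I • v) + fderiv ℝ (G j) x (Complex.I • v)),
          sq_nonneg (fderiv ℝ (G k) x (Complex.I • v) - fderiv ℝ (G j) x (Complex.I • v))]
    calc |(∏ s ∈ (univ.erase j).erase k, G s x)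
        * (fderiv ℝ (G k) x v * fderiv ℝ (G j) x v
           + fderiv ℝ (G k) x (Complex.I • v) * fderiv ℝ (G j) x (Complex.I • v))|
        = |∏ s ∈ (univ.erase j).erase k, G s x|
          * |fderiv ℝ (G k) x v * fderiv ℝ (G j) x v
           + fderiv ℝ (G k) x (Complex.I • v) * fderiv ℝ (G j) x (Complex.I • v)| := abs_mul _ _
      _ ≤ 1 * |fderiv ℝ (G k) x v * fderiv ℝ (G j) x v
           + fderiv ℝ (G k) x (Complex.I • v) * fderiv ℝ (G j) x (Complex.I • v)| :=
          mul_le_mul_of_nonneg_right hQ (abs_nonneg _)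
      _ = _ := one_mul _
      _ ≤ _ := he
  have hdouble : ∑ j : Fin (κ+1), ∑ k ∈ univ.erase j,
      (((fderiv ℝ (G j) x v)^2 + (fderiv ℝ (G j) x (Complex.I • v))^2)/2
        + ((fderiv ℝ (G k) x v)^2 + (fderiv ℝ (G k) x (Complex.I • v))^2)/2)
      = (κ:ℝ) * ∑ j, ((fderiv ℝ (G j) x v)^2 + (fderiv ℝ (G j) x (Complex.I • v))^2) := by
    have h1 : ∀ j : Fin (κ+1), ∑ k ∈ univ.erase j,
        (((fderiv ℝ (G j) x v)^2 + (fderiv ℝ (G j) x (Complex.I • v))^2)/2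
          + ((fderiv ℝ (G k) x v)^2 + (fderiv ℝ (G k) x (Complex.I • v))^2)/2)
        = (κ:ℝ) * (((fderiv ℝ (G j) x v)^2 + (fderiv ℝ (G j) x (Complex.I • v))^2)/2)
          + ((∑ k, (((fderiv ℝ (G k) x v)^2 + (fderiv ℝ (G k) x (Complex.I • v))^2)/2))
            - ((fderiv ℝ (G j) x v)^2 + (fderiv ℝ (G j) x (Complex.I • v))^2)/2) := by
      intro j
      rw [Finset.sum_add_distrib, Finset.sum_const, Finset.card_erase_of_mem (Finset.mem_univ j),
        Finset.sum_erase_eq_sub (Finset.mem_univ j), Finset.card_univ, Fintype.card_fin,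
        Nat.add_sub_cancel, nsmul_eq_mul]
    rw [Finset.sum_congr rfl (fun j _ => h1 j), Finset.sum_add_distrib,
      Finset.sum_sub_distrib, Finset.sum_const, Finset.card_univ, Fintype.card_fin,
      nsmul_eq_mul, ← Finset.mul_sum]
    have h2 : ∑ j : Fin (κ+1), (((fderiv ℝ (G j) x v)^2 + (fderiv ℝ (G j) x (Complex.I • v))^2)/2)
        = (∑ j, ((fderiv ℝ (G j) x v)^2 + (fderiv ℝ (G j) x (Complex.I • v))^2))/2 := by
      rw [Finset.sum_div]
    rw [h2]
    push_cast
    ring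
  have habs : |∑ j : Fin (κ+1), ∑ k ∈ univ.erase j,
      (∏ s ∈ (univ.erase j).erase k, G s x)
        * (fderiv ℝ (G k) x v * fderiv ℝ (G j) x v
           + fderiv ℝ (G k) x (Complex.I • v) * fderiv ℝ (G j) x (Complex.I • v))|
      ≤ (κ:ℝ) * ∑ j, ((fderiv ℝ (G j) x v)^2 + (fderiv ℝ (G j) x (Complex.I • v))^2) := by
    calc |∑ j : Fin (κ+1), ∑ k ∈ univ.erase j,
        (∏ s ∈ (univ.erase j).erase k, G s x)
          * (fderiv ℝ (G k) x v * fderiv ℝ (G j) x v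
             + fderiv ℝ (G k) x (Complex.I • v) * fderiv ℝ (G j) x (Complex.I • v))|
        ≤ ∑ j : Fin (κ+1), |∑ k ∈ univ.erase j,
            (∏ s ∈ (univ.erase j).erase k, G s x)
              * (fderiv ℝ (G k) x v * fderiv ℝ (G j) x v
                 + fderiv ℝ (G k) x (Complex.I • v) * fderiv ℝ (G j) x (Complex.I • v))| :=
          Finset.abs_sum_le_sum_abs _ _
      _ ≤ ∑ j : Fin (κ+1), ∑ k ∈ univ.erase j,
            |(∏ s ∈ (univ.erase j).erase k, G s x)
              * (fderiv ℝ (G k) x v * fderiv ℝ (G j) x v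
                 + fderiv ℝ (G k) x (Complex.I • v) * fderiv ℝ (G j) x (Complex.I • v))| :=
          Finset.sum_le_sum fun j _ => Finset.abs_sum_le_sum_abs _ _
      _ ≤ ∑ j : Fin (κ+1), ∑ k ∈ univ.erase j,
            (((fderiv ℝ (G j) x v)^2 + (fderiv ℝ (G j) x (Complex.I • v))^2)/2
              + ((fderiv ℝ (G k) x v)^2 + (fderiv ℝ (G k) x (Complex.I • v))^2)/2) :=
          Finset.sum_le_sum fun j _ => Finset.sum_le_sum fun k _ => hone j k
      _ = _ := hdouble
  have hεT : -((κ:ℝ) * ∑ j, ((fderiv ℝ (G j) x v)^2 + (fderiv ℝ (G j) x (Complex.I • v))^2))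
      ≤ ε * ∑ j : Fin (κ+1), ∑ k ∈ univ.erase j,
          (∏ s ∈ (univ.erase j).erase k, G s x)
            * (fderiv ℝ (G k) x v * fderiv ℝ (G j) x v
               + fderiv ℝ (G k) x (Complex.I • v) * fderiv ℝ (G j) x (Complex.I • v)) := by
    rcases abs_le.mp habs with ⟨hl, hr⟩
    rcases hε with h | h <;> subst h <;> linarith
  -- coefficient nonnegativity
  have hcoeff : ∀ j : Fin (κ+1),
      0 ≤ (κ:ℝ) + 1 + κ * G j x + ε * ∏ s ∈ univ.erase j, G s x := by
    intro j
    have h1 : -1 ≤ G j x := (abs_le.mp (hGbound j x hx)).1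
    have hP : |∏ s ∈ univ.erase j, G s x| ≤ 1 := by
      rw [Finset.abs_prod]
      exact Finset.prod_le_one (fun s _ => abs_nonneg _) (fun s _ => hGbound s x hx)
    have h2 : -1 ≤ ε * ∏ s ∈ univ.erase j, G s x := by
      rcases abs_le.mp hP with ⟨hl, hr⟩
      rcases hε with h | h <;> subst h <;> linarith
    have h3 : (0:ℝ) ≤ κ := Nat.cast_nonneg κ
    nlinarith
  have hsecond : 0 ≤ ∑ j, ((κ : ℝ) + 1 + κ * G j x + ε * ∏ s ∈ univ.erase j, G s x)
      * Levi (G j) x v :=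
    Finset.sum_nonneg fun j _ => mul_nonneg (hcoeff j) (hGlevi j x hx v)
  have hfirst : (∑ j, ((κ : ℝ) + 1 + κ * G j x + ε * ∏ s ∈ univ.erase j, G s x)
      * Levi (G j) x v) ≤
      Levi (fun y => (∑ j, (((κ : ℝ) + 1) * G j y + (κ : ℝ) / 2 * (G j y) ^ 2)) +
          ε * ∏ j, G j y) x v := by
    rw [main, Finset.sum_add_distrib, Finset.sum_add_distrib, ← Finset.mul_sum, ← Finset.mul_sum]
    linarith [hεT]
  exact ⟨hfirst, hsecond, le_trans hsecond hfirst⟩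
end
end
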